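/- arXiv:math/0302098 — 4 statements merged into one kernel-verified Lean document; each statement's English description precedes it below -/
import Mathlib

section
/- The generalized Fibonacci group F(n−1, n) is not left-orderable for any n > 2. -/
/-- A group is left-orderable if there is a strict total order that is left-invariant. -/
def IsLeftOrderable (G : Type*) [Group G] : Prop :=
  ∃ r : G → G → Prop, IsStrictTotalOrder G r ∧ ∀ x y z : G, r x y → r (z * x) (z * y)

/-- The relator `x_i x_{i+1} ⋯ x_{i+n-2} x_{i+n-1}⁻¹` of the generalized Fibonacci
group `F(n-1, n)`, with indices taken modulo `n`. -/
def fibRel (n : ℕ) (i : ZMod n) : FreeGroup (ZMod n) :=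
  (((List.range (n - 1)).map (fun j => FreeGroup.of (i + (j : ZMod n)))).prod) *
    (FreeGroup.of (i + ((n - 1 : ℕ) : ZMod n)))⁻¹

/-- The generalized Fibonacci group
`F(n-1, n) = ⟨x₁,…,xₙ | x₁⋯x_{n-1} = xₙ, x₂⋯xₙ = x₁, …, xₙx₁⋯x_{n-2} = x_{n-1}⟩`. -/
def FibGroup (n : ℕ) : Type :=
  PresentedGroup {w : FreeGroup (ZMod n) | ∃ i : ZMod n, w = fibRel n i}

instance (n : ℕ) : Group (FibGroup n) :=
  inferInstanceAs (Group (PresentedGroup _))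

namespace FibNotLO

lemma coe_list (n : ℕ) (l : List ℕ) :
    (do let a ← l; pure ((a : ℕ) : ZMod n) : List (ZMod n))
      = l.map (fun a : ℕ => (a : ZMod n)) := by
  show l.flatMap (fun a : ℕ => [((a : ℕ) : ZMod n)]) = _
  induction l with
  | nil => rfl
  | cons a t ih => simp [List.flatMap_cons, ih]

lemma fibRel_eq (n : ℕ) (i : ZMod n) : fibRel n i =
    ((List.range (n - 1)).map (fun j : ℕ => FreeGroup.of (i + (j : ZMod n)))).prod *
      (FreeGroup.of (i + ((n - 1 : ℕ) : ZMod n)))⁻¹ := by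
  unfold fibRel
  rw [coe_list, List.map_map]
  rfl

/-- The relator set. -/
abbrev rels (n : ℕ) : Set (FreeGroup (ZMod n)) :=
  {w : FreeGroup (ZMod n) | ∃ i : ZMod n, w = fibRel n i}

/-- The canonical projection. -/
def pr (n : ℕ) : FreeGroup (ZMod n) →* FibGroup n :=
  QuotientGroup.mk' (Subgroup.normalClosure (rels n))

/-- The generators. -/
def X (n : ℕ) (i : ZMod n) : FibGroup n := pr n (FreeGroup.of i)

lemma relation (n : ℕ) (i : ZMod n) : pr n (fibRel n i) = 1 := by
  show (QuotientGroup.mk (fibRel n i) :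
      FreeGroup (ZMod n) ⧸ Subgroup.normalClosure (rels n)) = 1
  exact (QuotientGroup.eq_one_iff _).mpr (Subgroup.subset_normalClosure ⟨i, rfl⟩)

lemma prod_rel (n : ℕ) (i : ZMod n) :
    ((List.range (n - 1)).map (fun j : ℕ => X n (i + (j : ZMod n)))).prod
      = X n (i + ((n - 1 : ℕ) : ZMod n)) := by
  have h := relation n i
  rw [fibRel_eq] at h
  rw [map_mul, map_inv, map_list_prod, List.map_map, mul_inv_eq_one] at h
  exact h

variable (m : ℕ)

lemma cast_eq_neg_one : ((m + 1 + 1 : ℕ) : ZMod (m + 3)) = -1 := by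
  have h : ((m + 3 : ℕ) : ZMod (m + 3)) = 0 := ZMod.natCast_self _
  push_cast at h ⊢
  linear_combination h

lemma cast_eq_neg_two : ((m + 1 : ℕ) : ZMod (m + 3)) = -2 := by
  have h : ((m + 3 : ℕ) : ZMod (m + 3)) = 0 := ZMod.natCast_self _
  push_cast at h ⊢
  linear_combination h

/-- Product of the middle part. -/
def M (i : ZMod (m + 3)) : FibGroup (m + 3) :=
  ((List.range (m + 1)).map (fun j : ℕ => X (m + 3) (i + (j : ZMod (m + 3))))).prod

lemma split_front (i : ZMod (m + 3)) :
    X (m + 3) i * M m (i + 1) = X (m + 3) (i - 1) := by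
  have h := prod_rel (m + 3) i
  have hr : (m + 3 - 1) = (m + 1) + 1 := rfl
  rw [hr, List.range_succ_eq_map, List.map_cons, List.map_map, List.prod_cons] at h
  rw [cast_eq_neg_one m] at h
  have h1 : i + (-1 : ZMod (m + 3)) = i - 1 := by ring
  rw [h1] at h
  rw [show (((0 : ℕ) : ZMod (m + 3))) = 0 from Nat.cast_zero, add_zero] at h
  have h2 : ((fun j : ℕ => X (m + 3) (i + (j : ZMod (m + 3)))) ∘ Nat.succ)
      = fun j : ℕ => X (m + 3) ((i + 1) + (j : ZMod (m + 3))) := by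
    funext j
    simp only [Function.comp_def, Nat.succ_eq_add_one]
    congr 1
    push_cast
    ring
  rw [h2] at h
  unfold M
  exact h

lemma split_back (i : ZMod (m + 3)) :
    M m i * X (m + 3) (i - 2) = X (m + 3) (i - 1) := by
  have h := prod_rel (m + 3) i
  have hr : (m + 3 - 1) = (m + 1) + 1 := rfl
  rw [hr, List.range_succ] at h
  rw [List.map_append, List.prod_append, List.map_singleton, List.prod_singleton] at h
  rw [cast_eq_neg_one m, cast_eq_neg_two m] at h
  have h1 : i + (-1 : ZMod (m + 3)) = i - 1 := by ring
  have h2 : i + (-2 : ZMod (m + 3)) = i - 2 := by ring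
  rw [h1, h2] at h
  unfold M
  exact h

lemma sq_eq (i : ZMod (m + 3)) :
    X (m + 3) i * X (m + 3) i = X (m + 3) (i + 1) * X (m + 3) (i + 1) := by
  have hf := split_front m (i + 1)
  have hb := split_back m (i + 1 + 1)
  have e1 : i + 1 + 1 - 2 = i := by ring
  have e2 : i + 1 + 1 - 1 = i + 1 := by ring
  have e3 : i + 1 - 1 = i := by ring
  rw [e1, e2] at hb
  rw [e3] at hf
  have hM : M m (i + 1 + 1) = (X (m + 3) (i + 1))⁻¹ * X (m + 3) i := by
    rw [← hf]; group
  rw [hM] at hb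
  have h := congrArg (fun g => X (m + 3) (i + 1) * g) hb
  simpa [mul_assoc] using h

lemma sq_all (i : ZMod (m + 3)) :
    X (m + 3) i * X (m + 3) i = X (m + 3) 0 * X (m + 3) 0 := by
  have key : ∀ k : ℕ, X (m + 3) (k : ZMod (m + 3)) * X (m + 3) (k : ZMod (m + 3))
      = X (m + 3) 0 * X (m + 3) 0 := by
    intro k
    induction k with
    | zero => norm_num
    | succ k ih =>
      rw [← ih]
      have h := sq_eq m (k : ZMod (m + 3))
      have hc : (((k + 1 : ℕ)) : ZMod (m + 3)) = (k : ZMod (m + 3)) + 1 := by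
        push_cast; ring
      rw [hc]
      exact h.symm
  have hi : i = ((i.val : ℕ) : ZMod (m + 3)) := (ZMod.natCast_rightInverse i).symm
  rw [hi]
  exact key i.val

/-- The sign map: send generators 0 and 1 to -1, all others to 1. -/
def sgn (n : ℕ) : ZMod n → ℤˣ := fun k => if k = 0 ∨ k = 1 then -1 else 1

lemma full_prod (n : ℕ) (hn : 2 < n) (i : ZMod n) :
    ((List.range n).map (fun j : ℕ => sgn n (i + (j : ZMod n)))).prod = 1 := by
  haveI : NeZero n := ⟨by omega⟩
  haveI : Fact (1 < n) := ⟨by omega⟩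
  have h1 : ((List.range n).map (fun j : ℕ => sgn n (i + (j : ZMod n)))).prod
      = ∏ j ∈ Finset.range n, sgn n (i + (j : ZMod n)) := by
    rw [← Multiset.prod_coe, ← Multiset.map_coe]
    rfl
  have h2 : ∏ j ∈ Finset.range n, sgn n (i + (j : ZMod n))
      = ∏ k : ZMod n, sgn n k := by
    refine Finset.prod_nbij' (fun j => i + (j : ZMod n)) (fun k => (k - i).val)
      ?_ ?_ ?_ ?_ ?_
    · intro a _; exact Finset.mem_univ _
    · intro k _; exact Finset.mem_range.mpr (ZMod.val_lt _)
    · intro a ha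
      simp only [add_sub_cancel_left]
      exact ZMod.val_natCast_of_lt (Finset.mem_range.mp ha)
    · intro k _
      show i + (((k - i).val : ℕ) : ZMod n) = k
      rw [ZMod.natCast_rightInverse (k - i)]
      ring
    · intro a _; rfl
  have h3 : ∏ k : ZMod n, sgn n k = 1 := by
    have hsplit : ∀ k : ZMod n,
        sgn n k = (if k = 0 then (-1 : ℤˣ) else 1) * (if k = 1 then (-1 : ℤˣ) else 1) := by
      intro k
      unfold sgn
      by_cases h0 : k = 0
      · subst h0
        simp [zero_ne_one]
      · by_cases h1 : k = 1 <;> simp [h0, h1]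
    rw [Finset.prod_congr rfl (fun k _ => hsplit k), Finset.prod_mul_distrib]
    rw [Finset.prod_ite_eq' Finset.univ (0 : ZMod n) (fun _ => (-1 : ℤˣ)),
      Finset.prod_ite_eq' Finset.univ (1 : ZMod n) (fun _ => (-1 : ℤˣ))]
    simp
  rw [h1, h2, h3]

lemma lift_sgn (n : ℕ) (hn : 2 < n) : ∀ w ∈ rels n, FreeGroup.lift (sgn n) w = 1 := by
  rintro w ⟨i, rfl⟩
  rw [fibRel_eq]
  rw [map_mul, map_inv, map_list_prod, List.map_map]
  simp only [Function.comp_def, FreeGroup.lift_apply_of]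
  rw [Int.units_inv_eq_self]
  have hsplit : List.range n = List.range (n - 1) ++ [n - 1] := by
    obtain ⟨k, rfl⟩ : ∃ k, n = k + 1 := ⟨n - 1, by omega⟩
    simp [List.range_succ]
  have hfull := full_prod n hn i
  rw [hsplit, List.map_append, List.prod_append, List.map_singleton,
    List.prod_singleton] at hfull
  exact hfull

/-- The sign homomorphism. -/
def phi (n : ℕ) (hn : 2 < n) : FibGroup n →* ℤˣ :=
  PresentedGroup.toGroup (lift_sgn n hn)

lemma phi_X (n : ℕ) (hn : 2 < n) (i : ZMod n) : phi n hn (X n i) = sgn n i :=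
  PresentedGroup.toGroup.of (lift_sgn n hn)

lemma X_ne_one (n : ℕ) (hn : 2 < n) : X n 0 ≠ 1 := by
  intro h
  have h2 := phi_X n hn 0
  rw [h, map_one] at h2
  have h3 : sgn n 0 = -1 := by simp [sgn]
  rw [h3] at h2
  exact absurd h2 (by decide)

lemma key (r : FibGroup (m + 3) → FibGroup (m + 3) → Prop)
    (htr : ∀ {a b c}, r a b → r b c → r a c)
    (hirr : ∀ a, ¬ r a a)
    (htc : ∀ a b, r a b ∨ a = b ∨ r b a)
    (hinv : ∀ x y z, r x y → r (z * x) (z * y))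
    (hz : r 1 (X (m + 3) 0 * X (m + 3) 0)) : False := by
  have mulpos : ∀ {a b : FibGroup (m + 3)}, r 1 a → r 1 b → r 1 (a * b) := by
    intro a b ha hb
    have h := hinv 1 b a hb
    rw [mul_one] at h
    exact htr ha h
  have pos : ∀ i : ZMod (m + 3), r 1 (X (m + 3) i) := by
    intro i
    rcases htc 1 (X (m + 3) i) with h | h | h
    · exact h
    · exfalso
      have hs := sq_all m i
      rw [← h, one_mul] at hs
      rw [← hs] at hz
      exact hirr 1 hz
    · exfalso
      have h2 := hinv (X (m + 3) i) 1 (X (m + 3) i) h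
      rw [mul_one] at h2
      rw [sq_all m i] at h2
      exact hirr 1 (htr hz (htr h2 h))
  have listpos : ∀ l : List (FibGroup (m + 3)),
      (∀ x ∈ l, r 1 x) → r 1 l.prod ∨ l.prod = 1 := by
    intro l hl
    induction l with
    | nil => right; exact List.prod_nil
    | cons a t ih =>
      rw [List.prod_cons]
      have ha := hl a (List.mem_cons_self)
      rcases ih (fun x hx => hl x (List.mem_cons_of_mem a hx)) with h | h
      · left; exact mulpos ha h
      · rw [h, mul_one]; left; exact ha
  have Mpos : ∀ i : ZMod (m + 3), r 1 (M m i) := by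
    intro i
    unfold M
    rw [List.range_succ_eq_map, List.map_cons, List.map_map, List.prod_cons]
    rw [show (((0 : ℕ) : ZMod (m + 3))) = 0 from Nat.cast_zero, add_zero]
    have hmem : ∀ x ∈ (List.range m).map
        ((fun j : ℕ => X (m + 3) (i + (j : ZMod (m + 3)))) ∘ Nat.succ), r 1 x := by
      intro x hx
      obtain ⟨j, _, rfl⟩ := List.mem_map.mp hx
      exact pos _
    rcases listpos _ hmem with h | h
    · exact mulpos (pos i) h
    · rw [h, mul_one]; exact pos i
  have step : ∀ i : ZMod (m + 3), r (X (m + 3) (i + 1)) (X (m + 3) i) := by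
    intro i
    have hf := split_front m (i + 1)
    have e : i + 1 - 1 = i := by ring
    rw [e] at hf
    have h := hinv 1 (M m (i + 1 + 1)) (X (m + 3) (i + 1)) (Mpos (i + 1 + 1))
    rw [mul_one, hf] at h
    exact h
  have chain : ∀ k : ℕ, r (X (m + 3) ((k + 1 : ℕ) : ZMod (m + 3))) (X (m + 3) 0) := by
    intro k
    induction k with
    | zero =>
      have h01 : (((0 + 1 : ℕ)) : ZMod (m + 3)) = 0 + 1 := by push_cast; ring
      rw [h01]
      exact step 0
    | succ k ih =>
      have hc : (((k + 1 + 1 : ℕ)) : ZMod (m + 3)) = ((k + 1 : ℕ) : ZMod (m + 3)) + 1 := by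
        push_cast; ring
      rw [hc]
      exact htr (step _) ih
  have hfin := chain (m + 2)
  have hc : (((m + 2 + 1 : ℕ)) : ZMod (m + 3)) = 0 := by
    rw [show m + 2 + 1 = m + 3 from rfl]
    exact ZMod.natCast_self _
  rw [hc] at hfin
  exact hirr _ hfin

end FibNotLO

open FibNotLO in
/-- The generalized Fibonacci group `F(n-1, n)` is not left-orderable for `n > 2`. -/
theorem stmt_4 (n : ℕ) (hn : 2 < n) : ¬ IsLeftOrderable (FibGroup n) := by
  obtain ⟨m, rfl⟩ : ∃ m, n = m + 3 := ⟨n - 3, by omega⟩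
  rintro ⟨r, hsto, hinv⟩
  haveI : IsStrictTotalOrder _ r := hsto
  have htc : ∀ a b, r a b ∨ a = b ∨ r b a := fun a b => trichotomous_of r a b
  have htr : ∀ {a b c}, r a b → r b c → r a c := fun h h' => trans_of r h h'
  have hirr : ∀ a, ¬ r a a := fun a => irrefl_of r a
  rcases htc 1 (X (m + 3) 0 * X (m + 3) 0) with h | h | h
  · exact key m r htr hirr htc hinv h
  · have hX : X (m + 3) 0 = 1 := by
      rcases htc 1 (X (m + 3) 0) with h1 | h1 | h1
      · exfalso
        have h2 := hinv 1 (X (m + 3) 0) (X (m + 3) 0) h1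
        rw [mul_one, ← h] at h2
        exact hirr _ (htr h1 h2)
      · exact h1.symm
      · exfalso
        have h2 := hinv (X (m + 3) 0) 1 (X (m + 3) 0) h1
        rw [mul_one, ← h] at h2
        exact hirr _ (htr h2 h1)
    exact X_ne_one (m + 3) (by omega) hX
  · exact key m (fun a b => r b a) (fun {a b c} h h' => htr h' h) hirr
      (fun a b => by
        rcases htc a b with h' | h' | h'
        · exact Or.inr (Or.inr h')
        · exact Or.inr (Or.inl h')
        · exact Or.inl h')
      (fun x y z hxy => hinv y x z hxy) h
end

section
/- In the generalized Fibonacci group F(n−1, n) with n ≥ 3, all the elements x₁², x₂², …, xₙ², and x₁x₂⋯xₙ are equal to a common central element t. -/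
/-- The generator `xᵢ` of `F(n-1, n)`. -/
def fibGen (n : ℕ) (i : ZMod n) : FibGroup n :=
  PresentedGroup.of (rels := {w : FreeGroup (ZMod n) | ∃ i : ZMod n, w = fibRel n i}) i

private lemma coe_list (n : ℕ) (l : List ℕ) :
    (do let a ← l; pure ((a : ZMod n)) : List (ZMod n)) = l.map (Nat.cast) := by
  show List.flatMap (fun a : ℕ => [(a : ZMod n)]) l = _
  induction l <;> simp [*]

/-- The product `x_i x_{i+1} ⋯ x_{i+n-2}`. -/
private def fibP (n : ℕ) (i : ZMod n) : FibGroup n :=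
  ((List.range (n - 1)).map (fun j : ℕ => fibGen n (i + (j : ZMod n)))).prod

/-- The product `x_i x_{i+1} ⋯ x_{i+n-1}` of `n` consecutive generators. -/
private def fibQ (n : ℕ) (i : ZMod n) : FibGroup n :=
  ((List.range n).map (fun j : ℕ => fibGen n (i + (j : ZMod n)))).prod

/-- The defining relation: `x_i x_{i+1} ⋯ x_{i+n-2} = x_{i+n-1}`. -/
private lemma fib_relP (n : ℕ) (i : ZMod n) :
    fibP n i = fibGen n (i + ((n - 1 : ℕ) : ZMod n)) := by
  have h1 : (PresentedGroup.mk {w : FreeGroup (ZMod n) | ∃ i : ZMod n, w = fibRel n i})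
      (fibRel n i) = 1 := by
    apply (QuotientGroup.eq_one_iff _).mpr
    exact Subgroup.subset_normalClosure ⟨i, rfl⟩
  rw [fibRel, map_mul, map_inv, map_list_prod, List.map_map, mul_inv_eq_one,
    coe_list, List.map_map] at h1
  exact h1

private lemma cast_sub_one_add_one {n : ℕ} (hn : 1 ≤ n) :
    ((n - 1 : ℕ) : ZMod n) + 1 = 0 := by
  have : (((n - 1) + 1 : ℕ) : ZMod n) = 0 := by
    rw [Nat.sub_add_cancel hn, ZMod.natCast_self]
  push_cast at this
  exact this

private lemma fibQa {n : ℕ} (hn : 1 ≤ n) (i : ZMod n) :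
    fibQ n i = fibGen n i * fibP n (i + 1) := by
  obtain ⟨m, rfl⟩ : ∃ m, n = m + 1 := ⟨n - 1, by omega⟩
  unfold fibQ fibP
  rw [Nat.add_sub_cancel, List.range_succ_eq_map, List.map_cons, List.prod_cons, List.map_map]
  congr 2
  · simp
  · apply List.map_congr_left
    intro j _
    simp only [Function.comp_apply]
    push_cast
    ring_nf

private lemma fibQb {n : ℕ} (hn : 1 ≤ n) (i : ZMod n) :
    fibQ n i = fibP n i * fibGen n (i + ((n - 1 : ℕ) : ZMod n)) := by
  obtain ⟨m, rfl⟩ : ∃ m, n = m + 1 := ⟨n - 1, by omega⟩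
  unfold fibQ fibP
  rw [Nat.add_sub_cancel, List.range_succ, List.map_append, List.prod_append,
    List.map_singleton, List.prod_singleton]

private lemma fibQ_eq_sq {n : ℕ} (hn : 1 ≤ n) (i : ZMod n) :
    fibQ n (i + 1) = fibGen n i * fibGen n i := by
  rw [fibQb hn, fib_relP]
  have h : i + 1 + ((n - 1 : ℕ) : ZMod n) = i := by
    rw [add_assoc, add_comm (1 : ZMod n), cast_sub_one_add_one hn, add_zero]
  rw [h]

private lemma fibQ_eq_sq' {n : ℕ} (hn : 1 ≤ n) (i : ZMod n) :
    fibQ n i = fibGen n i * fibGen n i := by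
  rw [fibQa hn, fib_relP]
  have h : i + 1 + ((n - 1 : ℕ) : ZMod n) = i := by
    rw [add_assoc, add_comm (1 : ZMod n), cast_sub_one_add_one hn, add_zero]
  rw [h]

private lemma fib_sq_succ {n : ℕ} (hn : 1 ≤ n) (i : ZMod n) :
    fibGen n i * fibGen n i = fibGen n (i + 1) * fibGen n (i + 1) := by
  rw [← fibQ_eq_sq hn, fibQ_eq_sq' hn]

private lemma fib_sq_const {n : ℕ} (hn : 1 ≤ n) (i : ZMod n) :
    fibGen n i * fibGen n i = fibGen n 0 * fibGen n 0 := by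
  have key : ∀ k : ℕ, fibGen n (k : ZMod n) * fibGen n (k : ZMod n)
      = fibGen n 0 * fibGen n 0 := by
    intro k
    induction k with
    | zero => simp
    | succ m ih => push_cast; rw [← fib_sq_succ hn, ih]
  have : NeZero n := ⟨by omega⟩
  have hk := ZMod.natCast_rightInverse (n := n) i
  rw [← hk, key]

/-- In `F(n-1, n)` with `n ≥ 3`, all of `x₁², …, xₙ²` and `x₁x₂⋯xₙ` are equal to a
common central element `t`. -/
theorem stmt_5 (n : ℕ) (hn : 3 ≤ n) :
    ∃ t : FibGroup n, (∀ g : FibGroup n, t * g = g * t) ∧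
      (∀ i : ZMod n, (fibGen n i) ^ 2 = t) ∧
      (((List.range n).map (fun j => fibGen n (((j + 1 : ℕ) : ZMod n)))).prod = t) := by
  have hn1 : 1 ≤ n := by omega
  refine ⟨fibGen n 0 * fibGen n 0, ?_, ?_, ?_⟩
  · intro g
    have hmem : g ∈ Subgroup.centralizer ({fibGen n 0 * fibGen n 0} :
        Set (FibGroup n)) := by
      apply PresentedGroup.generated_by
      intro j
      refine Subgroup.mem_centralizer_iff.mpr ?_
      rintro h hh
      replace hh : h = fibGen n 0 * fibGen n 0 := hh
      subst hh
      show fibGen n 0 * fibGen n 0 * fibGen n j = fibGen n j * (fibGen n 0 * fibGen n 0)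
      rw [← fib_sq_const hn1 j, mul_assoc]
    rw [Subgroup.mem_centralizer_iff] at hmem
    exact hmem _ rfl
  · intro i
    rw [sq]
    exact fib_sq_const hn1 i
  · have key : (((List.range n).map (fun j => fibGen n (((j + 1 : ℕ) : ZMod n)))).prod)
        = fibQ n 1 := by
      unfold fibQ
      congr 1
      apply List.map_congr_left
      intro j _
      push_cast
      rw [add_comm]
    rw [key, show (1 : ZMod n) = 0 + 1 by ring, fibQ_eq_sq hn1]
end

section
/- The group F(2,3) = ⟨x₁,x₂,x₃ | x₁x₂ = x₃, x₂x₃ = x₁, x₃x₁ = x₂⟩ is isomorphic to the quaternion group Q₈ of order 8, and is therefore finite and not left-orderable. -/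
/-- The group `F(2,3) = ⟨x₁, x₂, x₃ | x₁x₂ = x₃, x₂x₃ = x₁, x₃x₁ = x₂⟩`. -/
def F23 : Type :=
  PresentedGroup {w : FreeGroup (ZMod 3) |
    ∃ i : ZMod 3, w = FreeGroup.of i * FreeGroup.of (i + 1) * (FreeGroup.of (i + 2))⁻¹}

instance : Group F23 := inferInstanceAs (Group (PresentedGroup _))

namespace F23aux

def rels : Set (FreeGroup (ZMod 3)) :=
  {w : FreeGroup (ZMod 3) |
    ∃ i : ZMod 3, w = FreeGroup.of i * FreeGroup.of (i + 1) * (FreeGroup.of (i + 2))⁻¹}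

def X (i : ZMod 3) : F23 := PresentedGroup.of (rels := rels) i

lemma rel (i : ZMod 3) : X i * X (i + 1) = X (i + 2) := by
  have h : (QuotientGroup.mk (FreeGroup.of i * FreeGroup.of (i + 1) *
      (FreeGroup.of (i + 2))⁻¹) : PresentedGroup rels) = 1 :=
    (QuotientGroup.eq_one_iff _).mpr (Subgroup.subset_normalClosure ⟨i, rfl⟩)
  have h2 : X i * X (i + 1) * (X (i + 2))⁻¹ = 1 := h
  rw [mul_inv_eq_one] at h2
  exact h2

abbrev x : F23 := X 0
abbrev y : F23 := X 1

lemma rel0 : x * y = X 2 := rel 0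
lemma rel1 : y * X 2 = x := by have := rel 1; norm_num at this; exact this
lemma rel2 : X 2 * x = y := by have := rel 2; norm_num at this; exact this

lemma e1 : y * (x * y) = x := by rw [rel0]; exact rel1
lemma e2 : (x * y) * x = y := by rw [rel0]; exact rel2

lemma hxy : x * y = y * x⁻¹ := by rw [eq_mul_inv_iff_mul_eq]; exact e2

lemma hy2 : y * y = x * x := by
  have h := e1
  rw [hxy, ← mul_assoc, mul_inv_eq_iff_eq_mul] at h
  exact h

lemma hx2_comm : x * x * y = y * (x * x) := by
  calc x * x * y = y * y * y := by rw [hy2]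
    _ = y * (y * y) := by group
    _ = y * (x * x) := by rw [hy2]

lemma hx4 : x ^ 4 = 1 := by
  have h1 : x * (x * y) = x * (y * x⁻¹) := by rw [hxy]
  have h2 : x * x * y = y * x⁻¹ * x⁻¹ := by
    rw [mul_assoc, h1, ← mul_assoc, hxy, mul_assoc]
  have h3 : y * (x * x) = y * (x⁻¹ * x⁻¹) := by
    rw [← hx2_comm, h2, mul_assoc]
  have h4 : x * x = x⁻¹ * x⁻¹ := mul_left_cancel h3
  have h5 : (x * x) * (x * x) = 1 := by
    nth_rewrite 2 [h4]
    group
  calc x ^ 4 = (x * x) * (x * x) := by rw [show (4:ℕ) = 2 + 2 from rfl, pow_add, pow_two]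
    _ = 1 := h5

lemma hY2 : y ^ 2 = x ^ 2 := by rw [pow_two, pow_two]; exact hy2

lemma hY4 : y ^ 4 = 1 := by
  have h : (4:ℕ) = 2 * 2 := rfl
  rw [h, pow_mul, hY2, ← pow_mul]
  exact hx4

lemma hyinv : y⁻¹ = x * x * y := by
  rw [inv_eq_iff_mul_eq_one]
  calc y * (x * x * y) = (y * (x * x)) * y := (mul_assoc _ _ _).symm
    _ = (x * x * y) * y := by rw [hx2_comm]
    _ = (x * x) * (y * y) := by rw [mul_assoc]
    _ = (x * x) * (x * x) := by rw [hy2]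
    _ = x ^ 4 := by rw [show (4:ℕ) = 2 + 2 from rfl, pow_add, pow_two]
    _ = 1 := hx4

lemma hyx : y * x = x ^ 3 * y := by
  have h : y * x = x * y⁻¹ := by rw [eq_mul_inv_iff_mul_eq]; exact e1
  rw [h, hyinv]
  simp [pow_succ, pow_two, mul_assoc]

lemma hxinv : x⁻¹ = x ^ 3 := by
  rw [inv_eq_iff_mul_eq_one]
  calc x * x ^ 3 = x ^ 4 := by rw [show (4:ℕ) = 1 + 3 from rfl, pow_add, pow_one]
    _ = 1 := hx4

lemma hyinv' : y⁻¹ = y ^ 3 := by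
  rw [inv_eq_iff_mul_eq_one]
  calc y * y ^ 3 = y ^ 4 := by rw [show (4:ℕ) = 1 + 3 from rfl, pow_add, pow_one]
    _ = 1 := hY4

lemma comm1 (c : ℕ) : y * x ^ c = x ^ (3 * c) * y := by
  induction c with
  | zero => simp
  | succ c ih =>
    calc y * x ^ (c + 1) = (y * x ^ c) * x := by rw [pow_succ, mul_assoc]
      _ = x ^ (3 * c) * (y * x) := by rw [ih, mul_assoc]
      _ = x ^ (3 * c) * (x ^ 3 * y) := by rw [hyx]
      _ = x ^ (3 * (c + 1)) * y := by
          rw [← mul_assoc, ← pow_add, show 3 * c + 3 = 3 * (c + 1) by ring]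

lemma comm2 (b c : ℕ) : y ^ b * x ^ c = x ^ (3 ^ b * c) * y ^ b := by
  induction b with
  | zero => simp
  | succ b ih =>
    calc y ^ (b + 1) * x ^ c = y * (y ^ b * x ^ c) := by rw [pow_succ', mul_assoc]
      _ = y * (x ^ (3 ^ b * c) * y ^ b) := by rw [ih]
      _ = (y * x ^ (3 ^ b * c)) * y ^ b := by rw [mul_assoc]
      _ = (x ^ (3 * (3 ^ b * c)) * y) * y ^ b := by rw [comm1]
      _ = x ^ (3 ^ (b + 1) * c) * y ^ (b + 1) := by
          rw [mul_assoc, ← pow_succ', show 3 * (3 ^ b * c) = 3 ^ (b + 1) * c by ring]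

def H : Subgroup F23 where
  carrier := {z | ∃ a b : ℕ, z = x ^ a * y ^ b}
  one_mem' := ⟨0, 0, by simp⟩
  mul_mem' := by
    rintro _ _ ⟨a, b, rfl⟩ ⟨c, d, rfl⟩
    refine ⟨a + 3 ^ b * c, b + d, ?_⟩
    calc x ^ a * y ^ b * (x ^ c * y ^ d) = x ^ a * (y ^ b * x ^ c) * y ^ d := by
          simp [mul_assoc]
      _ = x ^ a * (x ^ (3 ^ b * c) * y ^ b) * y ^ d := by rw [comm2]
      _ = x ^ (a + 3 ^ b * c) * y ^ (b + d) := by rw [pow_add, pow_add]; simp [mul_assoc]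
  inv_mem' := by
    rintro _ ⟨a, b, rfl⟩
    refine ⟨3 ^ (3 * b) * (3 * a), 3 * b, ?_⟩
    rw [mul_inv_rev, ← inv_pow, ← inv_pow, hxinv, hyinv', ← pow_mul, ← pow_mul, comm2]

lemma mem_H (z : F23) : z ∈ H := by
  refine PresentedGroup.generated_by rels H ?_ z
  intro j
  have hj : ∀ j : ZMod 3, j = 0 ∨ j = 1 ∨ j = 2 := by decide
  rcases hj j with rfl | rfl | rfl
  · exact ⟨1, 0, by rw [pow_one, pow_zero, mul_one]; rfl⟩
  · exact ⟨0, 1, by rw [pow_zero, pow_one, one_mul]; rfl⟩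
  · exact ⟨1, 1, by rw [pow_one, pow_one]; exact rel0.symm⟩

lemma xmod (n : ℕ) : x ^ n = x ^ (n % 4) := by
  conv_lhs => rw [← Nat.div_add_mod n 4]
  rw [pow_add, pow_mul, hx4, one_pow, one_mul]

lemma reduce (a b : ℕ) : x ^ a * y ^ b = x ^ ((a + 2 * (b / 2)) % 4) * y ^ (b % 2) := by
  have hb : y ^ b = x ^ (2 * (b / 2)) * y ^ (b % 2) := by
    conv_lhs => rw [← Nat.div_add_mod b 2]
    rw [pow_add, pow_mul, hY2, ← pow_mul]
  rw [hb, ← mul_assoc, ← pow_add, xmod]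

def φ : Fin 4 × Fin 2 → F23 := fun p => x ^ p.1.val * y ^ p.2.val

lemma φ_surj : Function.Surjective φ := by
  intro z
  obtain ⟨a, b, rfl⟩ := mem_H z
  refine ⟨(⟨(a + 2 * (b / 2)) % 4, Nat.mod_lt _ (by norm_num)⟩,
    ⟨b % 2, Nat.mod_lt _ (by norm_num)⟩), ?_⟩
  exact (reduce a b).symm

def q : ZMod 3 → QuaternionGroup 2 := fun n =>
  if n = 0 then .a 1 else if n = 1 then .xa 0 else .xa 3

lemma hq : ∀ r ∈ rels, FreeGroup.lift q r = 1 := by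
  rintro _ ⟨i, rfl⟩
  simp only [map_mul, map_inv, FreeGroup.lift_apply_of]
  revert i
  decide

def f : F23 →* QuaternionGroup 2 := PresentedGroup.toGroup hq

lemma fx : f x = QuaternionGroup.a 1 := PresentedGroup.toGroup.of hq
lemma fy : f y = QuaternionGroup.xa 0 := PresentedGroup.toGroup.of hq

lemma f_surj : Function.Surjective f := by
  intro g
  obtain ⟨p, hp⟩ := (by decide : ∀ g : QuaternionGroup 2, ∃ p : Fin 4 × Fin 2,
    (QuaternionGroup.a 1) ^ p.1.val * (QuaternionGroup.xa 0) ^ p.2.val = g) g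
  exact ⟨φ p, by rw [φ, map_mul, map_pow, map_pow, fx, fy, hp]⟩

lemma finite_F23 : Finite F23 := Finite.of_surjective φ φ_surj

lemma card_F23 : Nat.card F23 = 8 := by
  haveI := finite_F23
  have h1 : Nat.card F23 ≤ 8 := by
    have := Nat.card_le_card_of_surjective φ φ_surj
    simpa using this
  have h2 : 8 ≤ Nat.card F23 := by
    have := Nat.card_le_card_of_surjective f f_surj
    rw [Nat.card_eq_fintype_card] at this
    rw [QuaternionGroup.card] at this
    simpa using this
  omega

lemma f_bij : Function.Bijective f := by
  haveI := finite_F23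
  refine (Nat.bijective_iff_surjective_and_card f).mpr ⟨f_surj, ?_⟩
  rw [card_F23, Nat.card_eq_fintype_card]
  rfl

lemma x_ne_one : x ≠ 1 := by
  intro h
  have : f x = 1 := by rw [h, map_one]
  rw [fx] at this
  exact absurd this (by decide)

end F23aux

lemma not_isLeftOrderable_of_finite (G : Type*) [Group G] [Finite G] (g : G) (hg : g ≠ 1) :
    ¬ IsLeftOrderable G := by
  rintro ⟨r, hsto, hinv⟩
  haveI := hsto
  have key : ∀ h : G, r 1 h → False := by
    intro h hh
    have hpow : ∀ n : ℕ, r 1 (h ^ (n + 1)) := by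
      intro n
      induction n with
      | zero => simpa using hh
      | succ n ih =>
        have step : r (h ^ (n + 1) * 1) (h ^ (n + 1) * h) := hinv _ _ _ hh
        rw [mul_one, ← pow_succ] at step
        exact _root_.trans ih step
    have hord : h ^ (orderOf h - 1 + 1) = 1 := by
      rw [Nat.sub_add_cancel (orderOf_pos h), pow_orderOf_eq_one]
    have := hpow (orderOf h - 1)
    rw [hord] at this
    exact irrefl_of r 1 this
  rcases trichotomous_of r 1 g with h1 | h1 | h1
  · exact key g h1
  · exact hg h1.symm
  · have : r (g⁻¹ * g) (g⁻¹ * 1) := hinv _ _ _ h1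
    rw [inv_mul_cancel, mul_one] at this
    exact key g⁻¹ this

/-- `F(2,3)` is isomorphic to the quaternion group `Q₈` of order `8`, hence finite and
not left-orderable. -/
theorem stmt_7 :
    Nonempty (F23 ≃* QuaternionGroup 2) ∧ Finite F23 ∧ ¬ IsLeftOrderable F23 := by
  haveI := F23aux.finite_F23
  exact ⟨⟨MulEquiv.ofBijective F23aux.f F23aux.f_bij⟩, F23aux.finite_F23,
    not_isLeftOrderable_of_finite F23 F23aux.x F23aux.x_ne_one⟩
end

section
/- A countable group is left-orderable if and only if it embeds into the group of orientation-preserving homeomorphisms of the real line. -/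
noncomputable section

/-- Extension of an order automorphism of ℚ to ℝ. -/
def qext (φ : ℚ ≃o ℚ) (x : ℝ) : ℝ :=
  sSup ((fun q : ℚ => (φ q : ℝ)) '' {q : ℚ | (q : ℝ) < x})

lemma qext_set_nonempty (φ : ℚ ≃o ℚ) (x : ℝ) :
    ((fun q : ℚ => (φ q : ℝ)) '' {q : ℚ | (q : ℝ) < x}).Nonempty := by
  obtain ⟨q, hq⟩ := exists_rat_lt x
  exact ⟨_, ⟨q, hq, rfl⟩⟩

lemma qext_set_bddAbove (φ : ℚ ≃o ℚ) (x : ℝ) :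
    BddAbove ((fun q : ℚ => (φ q : ℝ)) '' {q : ℚ | (q : ℝ) < x}) := by
  obtain ⟨Q, hQ⟩ := exists_rat_gt x
  refine ⟨(φ Q : ℝ), ?_⟩
  rintro y ⟨q, hq, rfl⟩
  dsimp only
  have : q < Q := by exact_mod_cast hq.trans hQ
  exact_mod_cast (φ.strictMono this).le

lemma qext_rat (φ : ℚ ≃o ℚ) (p : ℚ) : qext φ (p : ℝ) = (φ p : ℝ) := by
  apply le_antisymm
  · apply csSup_le (qext_set_nonempty φ _)
    rintro y ⟨q, hq, rfl⟩
    dsimp only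
    have : q < p := by exact_mod_cast hq
    exact_mod_cast (φ.strictMono this).le
  · refine le_of_forall_lt fun c hc => ?_
    obtain ⟨r, hcr, hrp⟩ := exists_rat_btwn hc
    have hrp' : r < φ p := by exact_mod_cast hrp
    have hq : ((φ.symm r : ℚ) : ℝ) < (p : ℝ) := by
      exact_mod_cast φ.symm.strictMono hrp' |>.trans_eq (φ.symm_apply_apply p)
    calc c < (r : ℝ) := hcr
      _ = (φ (φ.symm r) : ℝ) := by rw [φ.apply_symm_apply]
      _ ≤ _ := le_csSup (qext_set_bddAbove φ _) ⟨φ.symm r, hq, rfl⟩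

lemma qext_mono (φ : ℚ ≃o ℚ) : Monotone (qext φ) := fun x y hxy =>
  csSup_le_csSup (qext_set_bddAbove φ y) (qext_set_nonempty φ x)
    (Set.image_mono fun q hq => lt_of_lt_of_le hq hxy)

lemma qext_id (x : ℝ) : qext (OrderIso.refl ℚ) x = x := by
  apply le_antisymm
  · apply csSup_le (qext_set_nonempty _ _)
    rintro y ⟨q, hq, rfl⟩
    exact hq.le
  · refine le_of_forall_lt fun c hc => ?_
    obtain ⟨r, hcr, hrx⟩ := exists_rat_btwn hc
    exact hcr.trans_le (le_csSup (qext_set_bddAbove _ _) ⟨r, hrx, rfl⟩)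

lemma qext_comp (φ ψ : ℚ ≃o ℚ) (x : ℝ) : qext φ (qext ψ x) = qext (ψ.trans φ) x := by
  have hmem : ∀ q : ℚ, (q : ℝ) < qext ψ x ↔ ∃ p : ℚ, (p : ℝ) < x ∧ q < ψ p := by
    intro q
    rw [qext, lt_csSup_iff (qext_set_bddAbove ψ x) (qext_set_nonempty ψ x)]
    constructor
    · rintro ⟨y, ⟨p, hp, rfl⟩, hqy⟩
      exact ⟨p, hp, by simpa using hqy⟩
    · rintro ⟨p, hp, hq⟩
      exact ⟨_, ⟨p, hp, rfl⟩, by simpa using hq⟩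
  apply le_antisymm
  · apply csSup_le (qext_set_nonempty φ _)
    rintro y ⟨q, hq, rfl⟩
    obtain ⟨p, hp, hqp⟩ := (hmem q).mp hq
    dsimp only
    exact le_csSup (qext_set_bddAbove (ψ.trans φ) x) ⟨p, hp, rfl⟩ |>.trans'
      (by show (φ q : ℝ) ≤ ((ψ.trans φ) p : ℝ); exact_mod_cast (φ.strictMono hqp).le)
  · apply csSup_le (qext_set_nonempty _ _)
    rintro y ⟨p, hp, rfl⟩
    dsimp only
    rw [show ((ψ.trans φ) p : ℝ) = (φ (ψ p) : ℝ) from rfl, ← qext_rat φ (ψ p)]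
    apply csSup_le_csSup (qext_set_bddAbove φ _) (qext_set_nonempty φ _)
    rintro y ⟨q, hq, rfl⟩
    have : q < ψ p := by exact_mod_cast hq
    exact ⟨q, (hmem q).mpr ⟨p, hp, this⟩, rfl⟩

/-- The extension as an order isomorphism of ℝ. -/
def qextIso (φ : ℚ ≃o ℚ) : ℝ ≃o ℝ :=
  Equiv.toOrderIso
    ⟨qext φ, qext φ.symm,
      fun x => by rw [qext_comp, φ.self_trans_symm, qext_id],
      fun x => by rw [qext_comp, φ.symm_trans_self, qext_id]⟩
    (qext_mono φ) (qext_mono φ.symm)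

lemma qextIso_apply (φ : ℚ ≃o ℚ) (x : ℝ) : qextIso φ x = qext φ x := rfl

/-- The extension as a monoid hom. -/
def qextHom : (ℚ ≃o ℚ) →* (ℝ ≃o ℝ) where
  toFun := qextIso
  map_one' := by
    ext x
    exact qext_id x
  map_mul' φ ψ := by
    ext x
    exact (qext_comp φ ψ x).symm

lemma qextHom_injective : Function.Injective qextHom := by
  rw [injective_iff_map_eq_one]
  intro φ h
  ext q
  have := congrArg (fun f : ℝ ≃o ℝ => f (q : ℝ)) h
  simpa [qextHom, qextIso_apply, qext_rat, Rat.cast_injective.eq_iff] using this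

section Aux
variable {G : Type*} [Group G] [LinearOrder G]

lemma lex_dense : DenselyOrdered (Lex (G × ℚ)) := by
  constructor
  intro a b hab
  rcases Prod.Lex.lt_iff.mp hab with h | ⟨h1, h2⟩
  · refine ⟨toLex ((ofLex a).1, (ofLex a).2 + 1), ?_, ?_⟩
    · exact Prod.Lex.lt_iff.mpr (Or.inr ⟨rfl, lt_add_one _⟩)
    · exact Prod.Lex.lt_iff.mpr (Or.inl h)
  · obtain ⟨q, hq1, hq2⟩ := exists_between h2
    refine ⟨toLex ((ofLex a).1, q), ?_, ?_⟩
    · exact Prod.Lex.lt_iff.mpr (Or.inr ⟨rfl, hq1⟩)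
    · exact Prod.Lex.lt_iff.mpr (Or.inr ⟨h1, hq2⟩)

lemma lex_noMax : NoMaxOrder (Lex (G × ℚ)) := by
  constructor
  intro a
  exact ⟨toLex ((ofLex a).1, (ofLex a).2 + 1),
    Prod.Lex.lt_iff.mpr (Or.inr ⟨rfl, lt_add_one _⟩)⟩

lemma lex_noMin : NoMinOrder (Lex (G × ℚ)) := by
  constructor
  intro a
  exact ⟨toLex ((ofLex a).1, (ofLex a).2 - 1),
    Prod.Lex.lt_iff.mpr (Or.inr ⟨rfl, sub_one_lt _⟩)⟩

variable (hmul : ∀ x y z : G, x < y → z * x < z * y)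

/-- Left translation action on `Lex (G × ℚ)` as an order isomorphism. -/
def act (g : G) : Lex (G × ℚ) ≃o Lex (G × ℚ) := by
  have key : ∀ k : G, StrictMono (fun p : Lex (G × ℚ) =>
      toLex (k * (ofLex p).1, (ofLex p).2)) := by
    intro k p q hpq
    rcases Prod.Lex.lt_iff.mp hpq with h | ⟨h1, h2⟩
    · exact Prod.Lex.lt_iff.mpr (Or.inl (hmul _ _ k h))
    · exact Prod.Lex.lt_iff.mpr (Or.inr ⟨show k * (ofLex p).1 = k * (ofLex q).1 by rw [h1], h2⟩)
  exact Equiv.toOrderIso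
    ⟨fun p => toLex (g * (ofLex p).1, (ofLex p).2),
     fun p => toLex (g⁻¹ * (ofLex p).1, (ofLex p).2),
     fun p => by simp, fun p => by simp⟩
    (key g).monotone (key g⁻¹).monotone

lemma act_apply (g : G) (p : Lex (G × ℚ)) :
    act hmul g p = toLex (g * (ofLex p).1, (ofLex p).2) := rfl

end Aux

section Rev

lemma orderIso_real_ext (g h : ℝ ≃o ℝ) (H : ∀ q : ℚ, g (q : ℝ) = h (q : ℝ)) : g = h := by
  have : (g : ℝ → ℝ) = (h : ℝ → ℝ) :=
    Rat.denseRange_cast.equalizer g.toHomeomorph.continuous h.toHomeomorph.continuous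
      (funext H)
  ext x
  exact congrFun this x

end Rev

section Fwd
variable {G : Type*} [Group G] [Countable G] [LinearOrder G]

theorem aux_forward (hmul : ∀ x y z : G, x < y → z * x < z * y) :
    ∃ f : G →* (ℝ ≃o ℝ), Function.Injective f := by
  haveI := lex_dense (G := G)
  haveI := lex_noMax (G := G)
  haveI := lex_noMin (G := G)
  haveI : Countable (Lex (G × ℚ)) := inferInstanceAs (Countable (G × ℚ))
  haveI : Nonempty (Lex (G × ℚ)) := ⟨toLex (1, 0)⟩
  obtain ⟨e⟩ := Order.iso_of_countable_dense (Lex (G × ℚ)) ℚ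
  set c : G →* (ℚ ≃o ℚ) :=
    { toFun := fun g => (e.symm.trans (act hmul g)).trans e
      map_one' := by
        refine DFunLike.ext _ _ fun q => ?_
        simp [act_apply]
      map_mul' := by
        intro g h
        refine DFunLike.ext _ _ fun q => ?_
        show e (act hmul (g * h) (e.symm q)) = e (act hmul g (e.symm (e (act hmul h (e.symm q)))))
        simp [act_apply, mul_assoc] } with hc
  refine ⟨qextHom.comp c, ?_⟩
  rw [injective_iff_map_eq_one]
  intro g hg
  have h1 : c g = 1 := qextHom_injective (by simpa using hg)
  have h2 : act hmul g (toLex ((1 : G), (0 : ℚ))) = toLex ((1 : G), (0 : ℚ)) := by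
    have := congrArg (fun φ : ℚ ≃o ℚ => e.symm (φ (e (toLex ((1 : G), (0 : ℚ)))))) h1
    simpa [hc] using this
  have := congrArg (fun p : Lex (G × ℚ) => (ofLex p).1) h2
  simpa [act_apply] using this

end Fwd

/-- A countable group is left-orderable iff it embeds into the group `Homeo₊(ℝ)` of
orientation-preserving (i.e. strictly increasing) homeomorphisms of the real line,
which is the group of order-isomorphisms of `ℝ`. -/
theorem stmt_14 (G : Type*) [Group G] [Countable G] :
    IsLeftOrderable G ↔ ∃ f : G →* (ℝ ≃o ℝ), Function.Injective f := by
  constructor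
  · rintro ⟨r, hSTO, hinv⟩
    haveI := hSTO
    letI : DecidableRel r := Classical.decRel r
    letI : LinearOrder G := linearOrderOfSTO r
    exact aux_forward fun x y z h => hinv x y z h
  · rintro ⟨f, hf⟩
    set e : ℕ → ℚ := fun n => (Denumerable.eqv ℚ).symm n with he
    have esurj : Function.Surjective e := (Denumerable.eqv ℚ).symm.surjective
    refine ⟨fun g h => ∃ n, (∀ m, m < n → f g (e m) = f h (e m)) ∧ f g (e n) < f h (e n),
      { trichotomous := ?_, irrefl := ?_, trans := ?_ }, ?_⟩
    · intro g h
      by_cases hgh : g = h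
      · exact fun _ _ => hgh
      have hex : ∃ n, f g (e n) ≠ f h (e n) := by
        by_contra hco
        push_neg at hco
        refine hgh (hf (orderIso_real_ext _ _ fun q => ?_))
        obtain ⟨n, rfl⟩ := esurj q
        exact hco n
      set N := Nat.find hex with hN
      have hspec := Nat.find_spec hex
      have hmin : ∀ m, m < N → f g (e m) = f h (e m) := fun m hm =>
        not_ne_iff.mp (Nat.find_min hex hm)
      rcases lt_trichotomy (f g (e N)) (f h (e N)) with hlt | heq | hgt
      · exact fun h1 _ => absurd ⟨N, hmin, hlt⟩ h1
      · exact absurd heq hspec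
      · exact fun _ h2 => absurd ⟨N, fun m hm => (hmin m hm).symm, hgt⟩ h2
    · rintro g ⟨n, -, hlt⟩
      exact lt_irrefl _ hlt
    · rintro g h k ⟨n₁, h₁e, h₁l⟩ ⟨n₂, h₂e, h₂l⟩
      refine ⟨min n₁ n₂, fun m hm => (h₁e m (hm.trans_le (min_le_left _ _))).trans
        (h₂e m (hm.trans_le (min_le_right _ _))), ?_⟩
      rcases lt_trichotomy n₁ n₂ with h | h | h
      · rw [min_eq_left h.le]
        exact h₁l.trans_eq (h₂e n₁ h)
      · subst h
        rw [min_self]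
        exact h₁l.trans h₂l
      · rw [min_eq_right h.le]
        exact (h₁e n₂ h).trans_lt h₂l
    · rintro x y z ⟨n, hne, hl⟩
      have key : ∀ (w : G) (q : ℚ), f (z * w) (q : ℝ) = f z (f w (q : ℝ)) := by
        intro w q
        rw [map_mul]
        rfl
      refine ⟨n, fun m hm => ?_, ?_⟩
      · rw [key, key]
        exact congrArg _ (hne m hm)
      · rw [key, key]
        exact (f z).strictMono hl
end
end
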